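/- There exist two distinct Borel probability measures γ and γ̄ on ℝ² × ℝ² with the same marginals, both optimal for the Kantorovich problem with cost c(x,y) = e^{x₁+y₁}cos(x₂-y₂) + e^{2x₁}/2 + e^{2y₁}/2; hence optimal plans for this nondegenerate cost need not be unique. -/

import Mathlib

open MeasureTheory

/-- The cost `c(x,y) = e^{x₁+y₁} cos(x₂-y₂) + e^{2x₁}/2 + e^{2y₁}/2` on `ℝ² × ℝ²`. -/
noncomputable def cylCost (x y : ℝ × ℝ) : ℝ :=
  Real.exp (x.1 + y.1) * Real.cos (x.2 - y.2) + Real.exp (2 * x.1) / 2 + Real.exp (2 * y.1) / 2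

lemma cylCost_nonneg (x y : ℝ × ℝ) : 0 ≤ cylCost x y := by
  have h1 : -1 ≤ Real.cos (x.2 - y.2) := Real.neg_one_le_cos _
  have hx : Real.exp (2 * x.1) = Real.exp x.1 * Real.exp x.1 := by
    rw [← Real.exp_add]; ring_nf
  have hy : Real.exp (2 * y.1) = Real.exp y.1 * Real.exp y.1 := by
    rw [← Real.exp_add]; ring_nf
  have hxy : Real.exp (x.1 + y.1) = Real.exp x.1 * Real.exp y.1 := Real.exp_add _ _
  have hp := Real.exp_pos x.1
  have hq := Real.exp_pos y.1
  unfold cylCost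
  rw [hx, hy, hxy]
  nlinarith [sq_nonneg (Real.exp x.1 - Real.exp y.1), mul_pos hp hq]

lemma cylCost_zero {a b : ℝ} (h : Real.cos (a - b) = -1) :
    cylCost ((0 : ℝ), a) ((0 : ℝ), b) = 0 := by
  simp [cylCost, h]
  norm_num

open Real in
lemma cos_vals :
    Real.cos ((0:ℝ) - π) = -1 ∧ Real.cos (2*π - 3*π) = -1 ∧
    Real.cos ((0:ℝ) - 3*π) = -1 ∧ Real.cos (2*π - π) = -1 := by
  have h3 : (3:ℝ) * π = π + 2*π := by ring
  refine ⟨?_, ?_, ?_, ?_⟩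
  · rw [zero_sub, Real.cos_neg, Real.cos_pi]
  · have : (2:ℝ)*π - 3*π = -π := by ring
    rw [this, Real.cos_neg, Real.cos_pi]
  · rw [zero_sub, Real.cos_neg, h3, Real.cos_add_two_pi, Real.cos_pi]
  · have : (2:ℝ)*π - π = π := by ring
    rw [this, Real.cos_pi]

theorem cylCost_optimal_plans_not_unique :
    ∃ γ γbar : Measure ((ℝ × ℝ) × (ℝ × ℝ)),
      γ ≠ γbar ∧ IsProbabilityMeasure γ ∧ IsProbabilityMeasure γbar ∧
      γ.map Prod.fst = γbar.map Prod.fst ∧ γ.map Prod.snd = γbar.map Prod.snd ∧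
      (∀ γ' : Measure ((ℝ × ℝ) × (ℝ × ℝ)), IsProbabilityMeasure γ' →
        γ'.map Prod.fst = γ.map Prod.fst → γ'.map Prod.snd = γ.map Prod.snd →
        ∫ p, cylCost p.1 p.2 ∂γ ≤ ∫ p, cylCost p.1 p.2 ∂γ') ∧
      (∀ γ' : Measure ((ℝ × ℝ) × (ℝ × ℝ)), IsProbabilityMeasure γ' →
        γ'.map Prod.fst = γbar.map Prod.fst → γ'.map Prod.snd = γbar.map Prod.snd →
        ∫ p, cylCost p.1 p.2 ∂γbar ≤ ∫ p, cylCost p.1 p.2 ∂γ') := by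
  classical
  set π := Real.pi with hπdef
  -- source points
  set x₁ : ℝ × ℝ := ((0:ℝ), (0:ℝ)) with hx₁
  set x₂ : ℝ × ℝ := ((0:ℝ), 2*π) with hx₂
  set y₁ : ℝ × ℝ := ((0:ℝ), π) with hy₁
  set y₂ : ℝ × ℝ := ((0:ℝ), 3*π) with hy₂
  set γ : Measure ((ℝ × ℝ) × (ℝ × ℝ)) :=
    (2:ENNReal)⁻¹ • Measure.dirac (x₁, y₁) + (2:ENNReal)⁻¹ • Measure.dirac (x₂, y₂) with hγ
  set γbar : Measure ((ℝ × ℝ) × (ℝ × ℝ)) :=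
    (2:ENNReal)⁻¹ • Measure.dirac (x₁, y₂) + (2:ENNReal)⁻¹ • Measure.dirac (x₂, y₁) with hγbar
  have hπpos : 0 < π := Real.pi_pos
  have h12 : x₁ ≠ x₂ := by
    intro h
    rw [hx₁, hx₂, Prod.mk.injEq] at h
    nlinarith [h.2]
  have hy12 : y₁ ≠ y₂ := by
    intro h
    rw [hy₁, hy₂, Prod.mk.injEq] at h
    nlinarith [h.2]
  obtain ⟨hc1, hc2, hc3, hc4⟩ := cos_vals
  -- costs vanish on all four support points
  have hc₁₁ : cylCost x₁ y₁ = 0 := cylCost_zero hc1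
  have hc₂₂ : cylCost x₂ y₂ = 0 := cylCost_zero hc2
  have hc₁₂ : cylCost x₁ y₂ = 0 := cylCost_zero hc3
  have hc₂₁ : cylCost x₂ y₁ = 0 := cylCost_zero hc4
  have half_ne : (2:ENNReal)⁻¹ ≠ 0 := by norm_num
  -- probability measures
  have hprob : ∀ (a b : (ℝ × ℝ) × (ℝ × ℝ)),
      IsProbabilityMeasure ((2:ENNReal)⁻¹ • Measure.dirac a + (2:ENNReal)⁻¹ • Measure.dirac b) := by
    intro a b
    constructor
    simp [Measure.add_apply, Measure.smul_apply]
    rw [ENNReal.inv_two_add_inv_two]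
  have hPγ : IsProbabilityMeasure γ := hprob _ _
  have hPγbar : IsProbabilityMeasure γbar := hprob _ _
  -- distinctness: evaluate at the singleton {(x₁, y₁)}
  have hne : γ ≠ γbar := by
    intro h
    have hs : MeasurableSet ({(x₁, y₁)} : Set ((ℝ × ℝ) × (ℝ × ℝ))) :=
      measurableSet_singleton _
    have h1 : γ {(x₁, y₁)} = (2:ENNReal)⁻¹ := by
      rw [hγ]
      rw [Measure.add_apply, Measure.smul_apply, Measure.smul_apply,
        Measure.dirac_apply' _ hs, Measure.dirac_apply' _ hs]
      have hmem : (x₁, y₁) ∈ ({(x₁, y₁)} : Set ((ℝ × ℝ) × (ℝ × ℝ))) := rfl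
      have hnmem : (x₂, y₂) ∉ ({(x₁, y₁)} : Set ((ℝ × ℝ) × (ℝ × ℝ))) := by
        simp only [Set.mem_singleton_iff, Prod.mk.injEq]
        intro ⟨h1, _⟩; exact h12 h1.symm
      rw [Set.indicator_of_mem hmem, Set.indicator_of_notMem hnmem]
      simp
    have h2 : γbar {(x₁, y₁)} = 0 := by
      rw [hγbar]
      rw [Measure.add_apply, Measure.smul_apply, Measure.smul_apply,
        Measure.dirac_apply' _ hs, Measure.dirac_apply' _ hs]
      have hn1 : (x₁, y₂) ∉ ({(x₁, y₁)} : Set ((ℝ × ℝ) × (ℝ × ℝ))) := by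
        simp only [Set.mem_singleton_iff, Prod.mk.injEq]
        intro ⟨_, h2⟩; exact hy12 h2.symm
      have hn2 : (x₂, y₁) ∉ ({(x₁, y₁)} : Set ((ℝ × ℝ) × (ℝ × ℝ))) := by
        simp only [Set.mem_singleton_iff, Prod.mk.injEq]
        intro ⟨h1, _⟩; exact h12 h1.symm
      rw [Set.indicator_of_notMem hn1, Set.indicator_of_notMem hn2]
      simp
    rw [h] at h1
    rw [h1] at h2
    norm_num at h2
  -- marginals agree
  have hmapfst : γ.map Prod.fst = γbar.map Prod.fst := by
    rw [hγ, hγbar]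
    rw [Measure.map_add _ _ measurable_fst, Measure.map_add _ _ measurable_fst,
      Measure.map_smul, Measure.map_smul, Measure.map_smul, Measure.map_smul,
      Measure.map_dirac' measurable_fst, Measure.map_dirac' measurable_fst,
      Measure.map_dirac' measurable_fst, Measure.map_dirac' measurable_fst]
  have hmapsnd : γ.map Prod.snd = γbar.map Prod.snd := by
    rw [hγ, hγbar]
    rw [Measure.map_add _ _ measurable_snd, Measure.map_add _ _ measurable_snd,
      Measure.map_smul, Measure.map_smul, Measure.map_smul, Measure.map_smul,
      Measure.map_dirac' measurable_snd, Measure.map_dirac' measurable_snd,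
      Measure.map_dirac' measurable_snd, Measure.map_dirac' measurable_snd]
    rw [add_comm]
  -- integrals are zero
  have hintγ : ∫ p, cylCost p.1 p.2 ∂γ = 0 := by
    apply integral_eq_zero_of_ae
    rw [hγ, Filter.EventuallyEq, ae_add_measure_iff]
    constructor
    · rw [Measure.ae_ennreal_smul_measure_iff half_ne, ae_dirac_eq]
      exact Filter.eventually_pure.mpr hc₁₁
    · rw [Measure.ae_ennreal_smul_measure_iff half_ne, ae_dirac_eq]
      exact Filter.eventually_pure.mpr hc₂₂
  have hintγbar : ∫ p, cylCost p.1 p.2 ∂γbar = 0 := by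
    apply integral_eq_zero_of_ae
    rw [hγbar, Filter.EventuallyEq, ae_add_measure_iff]
    constructor
    · rw [Measure.ae_ennreal_smul_measure_iff half_ne, ae_dirac_eq]
      exact Filter.eventually_pure.mpr hc₁₂
    · rw [Measure.ae_ennreal_smul_measure_iff half_ne, ae_dirac_eq]
      exact Filter.eventually_pure.mpr hc₂₁
  refine ⟨γ, γbar, hne, hPγ, hPγbar, hmapfst, hmapsnd, ?_, ?_⟩
  · intro γ' _ _ _
    rw [hintγ]
    exact integral_nonneg fun p => cylCost_nonneg _ _
  · intro γ' _ _ _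
    rw [hintγbar]
    exact integral_nonneg fun p => cylCost_nonneg _ _
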